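/- In the multivariate soft-truncated likelihood setting, the estimating equation for the approximate selective MLE holds: if o₁*(β̂) = argmin_{o₁} {(1/2)(o₁ - Aβ̂ - b)ᵀΣ̄⁻¹(o₁ - Aβ̂ - b) + B(o₁)} with B convex C², then the maximizer of the approximate log-likelihood η ↦ ηᵀβ̂ - h*(η, 0), with h(β', o₁) = (1/2)β'ᵀΣ⁻¹β' + (1/2)(o₁ - Aβ' - b)ᵀΣ̄⁻¹(o₁ - Aβ' - b) + B(o₁), corresponds to β^MLE = β̂ + ΣAᵀΣ̄⁻¹(Aβ̂ + b - o₁*(β̂)), i.e., the optimal natural parameter is η* = Σ⁻¹β̂ + AᵀΣ̄⁻¹(Aβ̂ + b - o₁*(β̂)). -/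

import Mathlib

open Matrix

private lemma dp_symm17 {n : ℕ} (M : Matrix (Fin n) (Fin n) ℝ) (hM : Mᵀ = M)
    (x y : Fin n → ℝ) : x ⬝ᵥ M *ᵥ y = y ⬝ᵥ M *ᵥ x := by
  rw [dotProduct_mulVec, dotProduct_comm, ← mulVec_transpose, hM]

private lemma psd_nonneg17 {n : ℕ} {M : Matrix (Fin n) (Fin n) ℝ} (h : M.PosSemidef)
    (x : Fin n → ℝ) : 0 ≤ x ⬝ᵥ M *ᵥ x := by simpa using h.dotProduct_mulVec_nonneg x

private lemma quadExpand17 {n : ℕ} (M : Matrix (Fin n) (Fin n) ℝ) (hM : Mᵀ = M)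
    (u v : Fin n → ℝ) :
    (u + v) ⬝ᵥ M *ᵥ (u + v) = u ⬝ᵥ M *ᵥ u + 2 * ((M *ᵥ u) ⬝ᵥ v) + v ⬝ᵥ M *ᵥ v := by
  have e1 : u ⬝ᵥ M *ᵥ v = (M *ᵥ u) ⬝ᵥ v := by
    rw [dp_symm17 M hM u v, dotProduct_comm]
  have e2 : v ⬝ᵥ M *ᵥ u = (M *ᵥ u) ⬝ᵥ v := dotProduct_comm _ _
  rw [mulVec_add, dotProduct_add, add_dotProduct, add_dotProduct, e1, e2]
  ring

private lemma transp_dp17 {n p : ℕ} (A : Matrix (Fin n) (Fin p) ℝ)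
    (x : Fin n → ℝ) (y : Fin p → ℝ) : (Aᵀ *ᵥ x) ⬝ᵥ y = x ⬝ᵥ (A *ᵥ y) := by
  rw [mulVec_transpose, ← dotProduct_mulVec]

/-- Completing-the-square inequality: the concave quadratic is maximized at a stationary point. -/
private lemma F_le17 {d m : ℕ} (K : Matrix (Fin d) (Fin d) ℝ) (μ : Matrix (Fin m) (Fin m) ℝ)
    (hK : K.PosSemidef) (hKs : Kᵀ = K) (hμ : μ.PosSemidef) (hμs : μᵀ = μ)
    (A : Matrix (Fin m) (Fin d) ℝ) (b : Fin m → ℝ) (η : Fin d → ℝ) (g : Fin m → ℝ)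
    (q1 : Fin d → ℝ) (q2 : Fin m → ℝ)
    (h1 : η = K *ᵥ q1 - Aᵀ *ᵥ (μ *ᵥ (q2 - A *ᵥ q1 - b)))
    (h2 : g = μ *ᵥ (q2 - A *ᵥ q1 - b)) (p1 : Fin d → ℝ) (p2 : Fin m → ℝ) :
    η ⬝ᵥ p1 + g ⬝ᵥ p2 -
        (1 / 2 * (p1 ⬝ᵥ K *ᵥ p1) + 1 / 2 * ((p2 - A *ᵥ p1 - b) ⬝ᵥ μ *ᵥ (p2 - A *ᵥ p1 - b)))
      ≤ η ⬝ᵥ q1 + g ⬝ᵥ q2 -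
        (1 / 2 * (q1 ⬝ᵥ K *ᵥ q1) + 1 / 2 * ((q2 - A *ᵥ q1 - b) ⬝ᵥ μ *ᵥ (q2 - A *ᵥ q1 - b))) := by
  obtain ⟨δ1, rfl⟩ : ∃ δ1, p1 = q1 + δ1 := ⟨p1 - q1, by abel⟩
  obtain ⟨δ2, rfl⟩ : ∃ δ2, p2 = q2 + δ2 := ⟨p2 - q2, by abel⟩
  subst h1 h2
  set r : Fin m → ℝ := q2 - A *ᵥ q1 - b with hrdef
  have hr : q2 + δ2 - A *ᵥ (q1 + δ1) - b = r + (δ2 - A *ᵥ δ1) := by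
    rw [hrdef, mulVec_add]; abel
  rw [hr, quadExpand17 μ hμs, quadExpand17 K hKs]
  have n1 := psd_nonneg17 hK δ1
  have n2 := psd_nonneg17 hμ (δ2 - A *ᵥ δ1)
  have E1 : (K *ᵥ q1 - Aᵀ *ᵥ (μ *ᵥ r)) ⬝ᵥ (q1 + δ1)
      = (K *ᵥ q1 - Aᵀ *ᵥ (μ *ᵥ r)) ⬝ᵥ q1 + ((K *ᵥ q1) ⬝ᵥ δ1 - (μ *ᵥ r) ⬝ᵥ (A *ᵥ δ1)) := by
    rw [dotProduct_add]
    rw [show (K *ᵥ q1 - Aᵀ *ᵥ (μ *ᵥ r)) ⬝ᵥ δ1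
        = (K *ᵥ q1) ⬝ᵥ δ1 - (Aᵀ *ᵥ (μ *ᵥ r)) ⬝ᵥ δ1 from sub_dotProduct _ _ _,
      transp_dp17]
  have E2 : (μ *ᵥ r) ⬝ᵥ (q2 + δ2) = (μ *ᵥ r) ⬝ᵥ q2 + (μ *ᵥ r) ⬝ᵥ δ2 :=
    dotProduct_add _ _ _
  have E3 : (μ *ᵥ r) ⬝ᵥ (δ2 - A *ᵥ δ1) = (μ *ᵥ r) ⬝ᵥ δ2 - (μ *ᵥ r) ⬝ᵥ (A *ᵥ δ1) :=
    dotProduct_sub _ _ _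
  rw [E1, E2, E3]
  linarith

/-- Supporting-hyperplane inequality for `Bf` at the minimizer of the penalized problem. -/
private lemma support17 {m : ℕ} (μ : Matrix (Fin m) (Fin m) ℝ)
    (hμ : μ.PosSemidef) (hμs : μᵀ = μ) (Bf : (Fin m → ℝ) → ℝ)
    (hBconv : ConvexOn ℝ Set.univ Bf) (c ostar : Fin m → ℝ)
    (hostar : IsMinOn (fun o => 1 / 2 * ((o - c) ⬝ᵥ μ *ᵥ (o - c)) + Bf o) Set.univ ostar)
    (o : Fin m → ℝ) :
    Bf ostar - (μ *ᵥ (ostar - c)) ⬝ᵥ (o - ostar) ≤ Bf o := by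
  have hmin : ∀ x, 1 / 2 * ((ostar - c) ⬝ᵥ μ *ᵥ (ostar - c)) + Bf ostar
      ≤ 1 / 2 * ((x - c) ⬝ᵥ μ *ᵥ (x - c)) + Bf x :=
    fun x => isMinOn_iff.mp hostar x (Set.mem_univ x)
  set k : ℝ := (o - ostar) ⬝ᵥ μ *ᵥ (o - ostar) with hkdef
  have hk : 0 ≤ k := psd_nonneg17 hμ _
  set a : ℝ := (μ *ᵥ (ostar - c)) ⬝ᵥ (o - ostar) + Bf o - Bf ostar with hadef
  have key : ∀ t : ℝ, 0 < t → t ≤ 1 → 0 ≤ a + t / 2 * k := by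
    intro t ht ht1
    have h1 := hmin (ostar + t • (o - ostar))
    have hx : ostar + t • (o - ostar) - c = (ostar - c) + t • (o - ostar) := by abel
    rw [hx, quadExpand17 μ hμs] at h1
    simp only [mulVec_smul, dotProduct_smul, smul_dotProduct, smul_eq_mul] at h1
    have h2 : Bf (ostar + t • (o - ostar)) ≤ (1 - t) * Bf ostar + t * Bf o := by
      have h3 := hBconv.2 (Set.mem_univ ostar) (Set.mem_univ o)
        (by linarith : (0:ℝ) ≤ 1 - t) (le_of_lt ht) (by ring)
      have hxx : (1 - t) • ostar + t • o = ostar + t • (o - ostar) := by module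
      rw [hxx] at h3; simpa using h3
    have h4 : 0 ≤ t * (a + t / 2 * k) := by
      rw [hadef, hkdef]; nlinarith [h1, h2]
    nlinarith [h4, ht]
  by_contra hneg
  push_neg at hneg
  have ha : a < 0 := by rw [hadef]; linarith
  have h1 := key 1 one_pos le_rfl
  have hkpos : 0 < k := by nlinarith
  have ht1 : (0:ℝ) < -a / k := div_pos (by linarith) hkpos
  have ht2 : -a / k ≤ 1 := by rw [div_le_one hkpos]; nlinarith
  have h2 := key (-a / k) ht1 ht2
  have h3 : -a / k / 2 * k = -a / 2 := by field_simp
  rw [h3] at h2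
  linarith

/-- The inner (concave) objective of the convex-conjugate supremum. -/
private noncomputable def G17 {d m : ℕ} (S : Matrix (Fin d) (Fin d) ℝ) (Sb : Matrix (Fin m) (Fin m) ℝ)
    (A : Matrix (Fin m) (Fin d) ℝ) (b : Fin m → ℝ) (Bf : (Fin m → ℝ) → ℝ)
    (η : Fin d → ℝ) (p : (Fin d → ℝ) × (Fin m → ℝ)) : ℝ :=
  η ⬝ᵥ p.1 -
    ((1 / 2) * (p.1 ⬝ᵥ (S⁻¹ *ᵥ p.1))
      + (1 / 2) * ((p.2 - A *ᵥ p.1 - b) ⬝ᵥ (Sb⁻¹ *ᵥ (p.2 - A *ᵥ p.1 - b)))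
      + Bf p.2)

theorem stmt17 {d m : ℕ} (S : Matrix (Fin d) (Fin d) ℝ) (Sb : Matrix (Fin m) (Fin m) ℝ)
    (hS : S.PosDef) (hSb : Sb.PosDef)
    (A : Matrix (Fin m) (Fin d) ℝ) (b : Fin m → ℝ) (βhat : Fin d → ℝ)
    (Bf : (Fin m → ℝ) → ℝ) (hB : ContDiff ℝ 2 Bf) (hBconv : ConvexOn ℝ Set.univ Bf)
    (ostar : Fin m → ℝ)
    (hostar : IsMinOn (fun o =>
        (1 / 2) * ((o - A *ᵥ βhat - b) ⬝ᵥ (Sb⁻¹ *ᵥ (o - A *ᵥ βhat - b))) + Bf o)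
        Set.univ ostar) :
    IsMaxOn (fun η : Fin d → ℝ =>
        η ⬝ᵥ βhat - ⨆ p : (Fin d → ℝ) × (Fin m → ℝ),
          (η ⬝ᵥ p.1 -
            ((1 / 2) * (p.1 ⬝ᵥ (S⁻¹ *ᵥ p.1))
              + (1 / 2) * ((p.2 - A *ᵥ p.1 - b) ⬝ᵥ (Sb⁻¹ *ᵥ (p.2 - A *ᵥ p.1 - b)))
              + Bf p.2)))
      Set.univ
      (S⁻¹ *ᵥ βhat + Aᵀ *ᵥ (Sb⁻¹ *ᵥ (A *ᵥ βhat + b - ostar))) ∧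
    S *ᵥ (S⁻¹ *ᵥ βhat + Aᵀ *ᵥ (Sb⁻¹ *ᵥ (A *ᵥ βhat + b - ostar)))
      = βhat + S *ᵥ (Aᵀ *ᵥ (Sb⁻¹ *ᵥ (A *ᵥ βhat + b - ostar))) := by
  have hSdet : IsUnit S.det := isUnit_iff_ne_zero.mpr hS.det_pos.ne'
  have hKpd : (S⁻¹).PosDef := hS.inv
  have hμpd : (Sb⁻¹).PosDef := hSb.inv
  have hKs : (S⁻¹)ᵀ = S⁻¹ := hKpd.1
  have hμs : (Sb⁻¹)ᵀ = Sb⁻¹ := hμpd.1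
  have hKpsd := hKpd.posSemidef
  have hμpsd := hμpd.posSemidef
  constructor
  · -- the maximization claim
    set ηs : Fin d → ℝ := S⁻¹ *ᵥ βhat + Aᵀ *ᵥ (Sb⁻¹ *ᵥ (A *ᵥ βhat + b - ostar)) with hηs
    set g : Fin m → ℝ := Sb⁻¹ *ᵥ (ostar - A *ᵥ βhat - b) with hg
    -- supporting hyperplane for Bf
    have hostar' : IsMinOn (fun o =>
        1 / 2 * ((o - (A *ᵥ βhat + b)) ⬝ᵥ Sb⁻¹ *ᵥ (o - (A *ᵥ βhat + b))) + Bf o)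
        Set.univ ostar := by
      simpa only [sub_sub] using hostar
    have hsupp : ∀ o, Bf ostar - g ⬝ᵥ (o - ostar) ≤ Bf o := by
      intro o
      have h := support17 Sb⁻¹ hμpsd hμs Bf hBconv (A *ᵥ βhat + b) ostar hostar' o
      have he : ostar - (A *ᵥ βhat + b) = ostar - A *ᵥ βhat - b := by abel
      rw [he] at h
      simpa [hg] using h
    -- generic bound for G given a stationary point
    have hbound : ∀ (η : Fin d → ℝ) (q1 : Fin d → ℝ) (q2 : Fin m → ℝ),
        η = S⁻¹ *ᵥ q1 - Aᵀ *ᵥ (Sb⁻¹ *ᵥ (q2 - A *ᵥ q1 - b)) →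
        g = Sb⁻¹ *ᵥ (q2 - A *ᵥ q1 - b) →
        ∀ p, G17 S Sb A b Bf η p ≤ η ⬝ᵥ q1 + g ⬝ᵥ q2 -
          (1 / 2 * (q1 ⬝ᵥ S⁻¹ *ᵥ q1)
            + 1 / 2 * ((q2 - A *ᵥ q1 - b) ⬝ᵥ Sb⁻¹ *ᵥ (q2 - A *ᵥ q1 - b)))
          - Bf ostar - g ⬝ᵥ ostar := by
      intro η q1 q2 h1 h2 p
      have hB1 : Bf ostar - (g ⬝ᵥ p.2 - g ⬝ᵥ ostar) ≤ Bf p.2 := by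
        have h := hsupp p.2
        rwa [dotProduct_sub] at h
      have hF := F_le17 S⁻¹ Sb⁻¹ hKpsd hKs hμpsd hμs A b η g q1 q2 h1 h2 p.1 p.2
      have hGdef : G17 S Sb A b Bf η p = η ⬝ᵥ p.1 -
          ((1 / 2) * (p.1 ⬝ᵥ (S⁻¹ *ᵥ p.1))
            + (1 / 2) * ((p.2 - A *ᵥ p.1 - b) ⬝ᵥ (Sb⁻¹ *ᵥ (p.2 - A *ᵥ p.1 - b)))
            + Bf p.2) := rfl
      rw [hGdef]
      linarith
    -- stationarity at (βhat, ostar) for ηs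
    have hstat1 : ηs = S⁻¹ *ᵥ βhat - Aᵀ *ᵥ (Sb⁻¹ *ᵥ (ostar - A *ᵥ βhat - b)) := by
      rw [hηs]
      have he : A *ᵥ βhat + b - ostar = -(ostar - A *ᵥ βhat - b) := by abel
      rw [he, mulVec_neg, mulVec_neg]
      abel
    -- the sup at ηs is attained at (βhat, ostar)
    have hval : ∀ η' : Fin d → ℝ, G17 S Sb A b Bf η' (βhat, ostar) = η' ⬝ᵥ βhat -
        ((1 / 2) * (βhat ⬝ᵥ (S⁻¹ *ᵥ βhat))
          + (1 / 2) * ((ostar - A *ᵥ βhat - b) ⬝ᵥ (Sb⁻¹ *ᵥ (ostar - A *ᵥ βhat - b)))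
          + Bf ostar) := fun η' => rfl
    have hGmax : ∀ p, G17 S Sb A b Bf ηs p ≤ G17 S Sb A b Bf ηs (βhat, ostar) := by
      intro p
      have h1 := hbound ηs βhat ostar hstat1 hg p
      have h2 := hval ηs
      have h5 : ηs ⬝ᵥ βhat + g ⬝ᵥ ostar -
          (1 / 2 * (βhat ⬝ᵥ S⁻¹ *ᵥ βhat)
            + 1 / 2 * ((ostar - A *ᵥ βhat - b) ⬝ᵥ Sb⁻¹ *ᵥ (ostar - A *ᵥ βhat - b)))
          - Bf ostar - g ⬝ᵥ ostar = G17 S Sb A b Bf ηs (βhat, ostar) := by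
        rw [h2]; ring
      linarith
    have hsup_star : (⨆ p, G17 S Sb A b Bf ηs p) = G17 S Sb A b Bf ηs (βhat, ostar) :=
      le_antisymm (ciSup_le hGmax) (le_ciSup ⟨G17 S Sb A b Bf ηs (βhat, ostar), by
        rintro x ⟨p, rfl⟩; exact hGmax p⟩ (βhat, ostar))
    rw [isMaxOn_iff]
    intro η _
    show η ⬝ᵥ βhat - (⨆ p, G17 S Sb A b Bf η p)
      ≤ ηs ⬝ᵥ βhat - (⨆ p, G17 S Sb A b Bf ηs p)
    -- bddAbove for arbitrary η, via its own stationary point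
    have hinv : ∀ x : Fin d → ℝ, S⁻¹ *ᵥ (S *ᵥ x) = x := by
      intro x
      rw [mulVec_mulVec, Matrix.nonsing_inv_mul _ hSdet, one_mulVec]
    set q1 : Fin d → ℝ := S *ᵥ (η + Aᵀ *ᵥ g) with hq1def
    set q2 : Fin m → ℝ := A *ᵥ q1 + b + (ostar - A *ᵥ βhat - b) with hq2def
    have hr : q2 - A *ᵥ q1 - b = ostar - A *ᵥ βhat - b := by rw [hq2def]; abel
    have hs2 : g = Sb⁻¹ *ᵥ (q2 - A *ᵥ q1 - b) := by rw [hr]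
    have hs1 : η = S⁻¹ *ᵥ q1 - Aᵀ *ᵥ (Sb⁻¹ *ᵥ (q2 - A *ᵥ q1 - b)) := by
      rw [← hs2, hq1def, hinv]; abel
    have hGb := hbound η q1 q2 hs1 hs2
    have hle : G17 S Sb A b Bf η (βhat, ostar) ≤ ⨆ p, G17 S Sb A b Bf η p :=
      le_ciSup ⟨_, by rintro x ⟨p, rfl⟩; exact hGb p⟩ (βhat, ostar)
    have e1 := hval η
    have e2 := hval ηs
    rw [hsup_star]
    linarith
  · -- the algebraic identity
    rw [mulVec_add, mulVec_mulVec, Matrix.mul_nonsing_inv _ hSdet, one_mulVec]
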